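/- arXiv:1106.0695 — 2 statements merged into one kernel-verified Lean document; each statement's English description precedes it below -/
import Mathlib

section
/- Differential type and typical differential dimension are differential birational invariants: if a and b are finite tuples from L that generate the same differential subfield over K (that is, K⟨a⟩ = K⟨b⟩), and p, q are Kolchin polynomials of a and of b over K respectively, then deg p = deg q and leadingCoeff(p) = leadingCoeff(q). -/
open Polynomial

/-- Iterated application of the derivations `δ` according to the multi-exponent `e`:
`x ↦ δ₁^[e 1] (δ₂^[e 2] (⋯ (δ_m^[e m] x)))`. -/
def thetaApply {L : Type*} {m : ℕ} (δ : Fin m → L → L) (e : Fin m → ℕ) : L → L :=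
  (List.ofFn (fun i => (δ i)^[e i])).foldr (· ∘ ·) id

/-- A subfield of `L` is a differential subfield if it is closed under each derivation. -/
def IsDiffSubfield {L : Type*} [Field L] {m : ℕ} (δ : Fin m → L → L) (K : Subfield L) : Prop :=
  ∀ i : Fin m, ∀ x ∈ K, δ i x ∈ K

/-- The transcendence degree (as a natural number) of an intermediate field over the base. -/
noncomputable def trdegNat {L : Type*} [Field L] (K : Subfield L) (E : IntermediateField K L) : ℕ :=
  (⨆ s : {s : Set E // AlgebraicIndependent K ((↑) : s → E)}, Cardinal.mk s.1).toNat

/-- `T_{η/K}(s)`: the transcendence degree over `K` of the subfield of `L` generated by `K`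
together with all `δ₁^(e 1) ⋯ δ_m^(e m) (η j)` with `e 1 + ⋯ + e m ≤ s`. -/
noncomputable def diffTrdeg {L : Type*} [Field L] {m n : ℕ} (δ : Fin m → L → L) (K : Subfield L)
    (η : Fin n → L) (s : ℕ) : ℕ :=
  trdegNat K (IntermediateField.adjoin K
    {x : L | ∃ e : Fin m → ℕ, (∑ i, e i) ≤ s ∧ ∃ j : Fin n, x = thetaApply δ e (η j)})

/-- `p` is a Kolchin polynomial of `η` over `K` if `p(s) = T_{η/K}(s)` for all large `s`. -/
def IsKolchinPoly {L : Type*} [Field L] {m n : ℕ} (δ : Fin m → L → L) (K : Subfield L)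
    (η : Fin n → L) (p : ℚ[X]) : Prop :=
  ∃ s₀ : ℕ, ∀ s : ℕ, s₀ ≤ s → p.eval (s : ℚ) = (diffTrdeg δ K η s : ℚ)

/-- `K⟨S⟩`: the smallest differential subfield of `L` containing `K` and `S`. -/
def diffAdjoin {L : Type*} [Field L] {m : ℕ} (δ : Fin m → L → L) (K : Subfield L)
    (S : Set L) : Subfield L :=
  sInf {F : Subfield L | IsDiffSubfield δ F ∧ K ≤ F ∧ S ⊆ F}

namespace Kolchin

variable {L : Type*}

lemma thetaApply_nil (δ : Fin 0 → L → L) (e : Fin 0 → ℕ) (x : L) :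
    thetaApply δ e x = x := by
  simp [thetaApply]

lemma thetaApply_succ {m : ℕ} (δ : Fin (m + 1) → L → L) (e : Fin (m + 1) → ℕ) (x : L) :
    thetaApply δ e x
      = (δ 0)^[e 0] (thetaApply (fun i : Fin m => δ i.succ) (fun i => e i.succ) x) := by
  simp [thetaApply, List.ofFn_succ]

lemma thetaApply_zero {m : ℕ} (δ : Fin m → L → L) (x : L) :
    thetaApply δ (fun _ => 0) x = x := by
  induction m with
  | zero => exact thetaApply_nil _ _ _
  | succ m ih => rw [thetaApply_succ]; exact ih _

lemma comm_thetaApply {m : ℕ} (δ : Fin m → L → L) (g : L → L)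
    (hg : ∀ i x, g (δ i x) = δ i (g x)) (e : Fin m → ℕ) (x : L) :
    g (thetaApply δ e x) = thetaApply δ e (g x) := by
  induction m with
  | zero => simp [thetaApply_nil]
  | succ m ih =>
      rw [thetaApply_succ, thetaApply_succ]
      have hcomm : ∀ y, g ((δ 0)^[e 0] y) = (δ 0)^[e 0] (g y) := by
        intro y
        exact (Function.Commute.iterate_right (fun z => hg 0 z) (e 0)) y
      rw [hcomm, ih (fun i : Fin m => δ i.succ) (fun i z => hg i.succ z)]

lemma thetaApply_update {m : ℕ} (δ : Fin m → L → L)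
    (hcomm : ∀ i j x, δ i (δ j x) = δ j (δ i x)) (e : Fin m → ℕ) (i : Fin m) (x : L) :
    thetaApply δ (Function.update e i (e i + 1)) x = thetaApply δ e (δ i x) := by
  induction m with
  | zero => exact absurd i.2 (by omega)
  | succ m ih =>
      rcases Fin.eq_zero_or_eq_succ i with rfl | ⟨j, rfl⟩
      · rw [thetaApply_succ, thetaApply_succ]
        have h1 : (fun k : Fin m => Function.update e 0 (e 0 + 1) k.succ)
            = fun k : Fin m => e k.succ := by
          funext k; exact Function.update_of_ne (Fin.succ_ne_zero k) _ _
        rw [Function.update_self, h1, Function.iterate_succ_apply,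
          comm_thetaApply (fun i : Fin m => δ i.succ) (δ 0) (fun j z => hcomm 0 j.succ z)]
      · rw [thetaApply_succ, thetaApply_succ]
        have h0 : Function.update e j.succ (e j.succ + 1) 0 = e 0 :=
          Function.update_of_ne (Fin.succ_ne_zero j).symm _ _
        have h1 : (fun k : Fin m => Function.update e j.succ (e j.succ + 1) k.succ)
            = Function.update (fun k : Fin m => e k.succ) j ((e j.succ) + 1) := by
          funext k
          rcases eq_or_ne k j with rfl | hkj
          · simp [Function.update_self]
          · rw [Function.update_of_ne (fun hk => hkj (Fin.succ_injective _ hk)),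
              Function.update_of_ne hkj]
        rw [h0, h1, ih (fun k : Fin m => δ k.succ) (fun a b z => hcomm a.succ b.succ z)]

lemma sum_update_succ {m : ℕ} (e : Fin m → ℕ) (i : Fin m) :
    (∑ j, Function.update e i (e i + 1) j) = (∑ j, e j) + 1 := by
  rw [Finset.sum_update_of_mem (Finset.mem_univ i), ← Finset.add_sum_erase _ e (Finset.mem_univ i)]
  rw [Finset.sdiff_singleton_eq_erase]
  omega

section Field

variable [Field L] {m : ℕ} (δ : Fin m → L → L) (K : Subfield L)

/-- The generating set at level `s`. -/
def G {n : ℕ} (η : Fin n → L) (s : ℕ) : Set L :=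
  {x : L | ∃ e : Fin m → ℕ, (∑ i, e i) ≤ s ∧ ∃ j : Fin n, x = thetaApply δ e (η j)}

/-- The intermediate field at level `s`. -/
noncomputable def E {n : ℕ} (η : Fin n → L) (s : ℕ) : IntermediateField K L :=
  IntermediateField.adjoin K (G δ η s)

lemma diffTrdeg_eq {n : ℕ} (η : Fin n → L) (s : ℕ) :
    diffTrdeg δ K η s = trdegNat K (E δ K η s) := rfl

lemma Emono {n : ℕ} (η : Fin n → L) {s t : ℕ} (hst : s ≤ t) :
    E δ K η s ≤ E δ K η t := by
  apply IntermediateField.adjoin.mono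
  rintro x ⟨e, he, j, rfl⟩
  exact ⟨e, he.trans hst, j, rfl⟩

variable (hadd : ∀ i : Fin m, ∀ x y : L, δ i (x + y) = δ i x + δ i y)
  (hleib : ∀ i : Fin m, ∀ x y : L, δ i (x * y) = x * δ i y + δ i x * y)
  (hcomm : ∀ i j : Fin m, ∀ x : L, δ i (δ j x) = δ j (δ i x))

include hadd in
lemma dzero (i : Fin m) : δ i 0 = 0 := by
  have h := hadd i 0 0
  rw [add_zero] at h
  exact (right_eq_add.mp h)

include hleib in
lemma done' (i : Fin m) : δ i 1 = 0 := by
  have h := hleib i 1 1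
  simp only [one_mul, mul_one] at h
  exact (right_eq_add.mp h)

include hadd in
lemma dneg (i : Fin m) (x : L) : δ i (-x) = -δ i x := by
  have h := hadd i x (-x)
  rw [add_neg_cancel, dzero δ hadd] at h
  exact (eq_neg_of_add_eq_zero_right h.symm)

omit hadd in
include hleib in
lemma dinv (i : Fin m) (x : L) (hx : x ≠ 0) : δ i x⁻¹ = x⁻¹ * -(δ i x * x⁻¹) := by
  have h := hleib i x x⁻¹
  rw [mul_inv_cancel₀ hx, done' δ hleib] at h
  have h2 : x * δ i x⁻¹ = -(δ i x * x⁻¹) := eq_neg_of_add_eq_zero_left h.symm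
  have h3 : x⁻¹ * (x * δ i x⁻¹) = δ i x⁻¹ := by
    rw [← mul_assoc, inv_mul_cancel₀ hx, one_mul]
  rw [← h3, h2]

variable (hK : IsDiffSubfield δ K)

include hadd hleib hcomm hK in
lemma step {n : ℕ} (η : Fin n → L) (i : Fin m) (s : ℕ) {x : L} (hx : x ∈ E δ K η s) :
    x ∈ E δ K η (s + 1) ∧ δ i x ∈ E δ K η (s + 1) := by
  induction hx using IntermediateField.adjoin_induction with
  | mem y hy =>
      obtain ⟨e, he, j, rfl⟩ := hy
      constructor
      · exact IntermediateField.subset_adjoin _ _ ⟨e, by omega, j, rfl⟩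
      · have hcm : δ i (thetaApply δ e (η j)) = thetaApply δ (Function.update e i (e i + 1)) (η j) :=
          (comm_thetaApply δ (δ i) (fun j' z => hcomm i j' z) e (η j)).trans
            (thetaApply_update δ hcomm e i (η j)).symm
        rw [hcm]
        exact IntermediateField.subset_adjoin _ _
          ⟨Function.update e i (e i + 1), by rw [sum_update_succ]; omega, j, rfl⟩
  | algebraMap y =>
      refine ⟨IntermediateField.algebraMap_mem _ y, ?_⟩
      have hmem : δ i (y : L) ∈ K := hK i (y : L) y.2
      exact IntermediateField.algebraMap_mem _ (⟨δ i (y : L), hmem⟩ : K)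
  | add x y hx' hy' ihx ihy =>
      exact ⟨add_mem ihx.1 ihy.1, by rw [hadd]; exact add_mem ihx.2 ihy.2⟩
  | inv x hx' ihx =>
      refine ⟨inv_mem ihx.1, ?_⟩
      rcases eq_or_ne x 0 with rfl | hx0
      · rw [inv_zero, dzero δ hadd]; exact zero_mem _
      · rw [dinv δ hleib i x hx0]
        exact mul_mem (inv_mem ihx.1) (neg_mem (mul_mem ihx.2 (inv_mem ihx.1)))
  | mul x y hx' hy' ihx ihy =>
      refine ⟨mul_mem ihx.1 ihy.1, ?_⟩
      rw [hleib]
      exact add_mem (mul_mem ihx.1 ihy.2) (mul_mem ihx.2 ihy.1)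

/-- iterate version -/
lemma iterate_mem (F : ℕ → IntermediateField K L) (g : L → L)
    (hg : ∀ t x, x ∈ F t → g x ∈ F (t + 1)) (k : ℕ) :
    ∀ t x, x ∈ F t → g^[k] x ∈ F (t + k) := by
  induction k with
  | zero => intro t x hx; exact hx
  | succ k ih =>
      intro t x hx
      rw [Function.iterate_succ_apply']
      exact hg (t + k) _ (ih t x hx)

lemma theta_mem_aux (F : ℕ → IntermediateField K L) :
    ∀ (m' : ℕ) (g : Fin m' → L → L),
      (∀ i t x, x ∈ F t → g i x ∈ F (t + 1)) →
      ∀ (e : Fin m' → ℕ) (t : ℕ) (x : L), x ∈ F t → thetaApply g e x ∈ F (t + ∑ i, e i) := by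
  intro m'
  induction m' with
  | zero =>
      intro g hg e t x hx
      rw [thetaApply_nil]
      simpa using hx
  | succ m' ih =>
      intro g hg e t x hx
      rw [thetaApply_succ]
      have h1 := ih (fun i : Fin m' => g i.succ) (fun i t x hx => hg i.succ t x hx)
        (fun i => e i.succ) t x hx
      have h2 := iterate_mem K F (g 0) (fun t x hx => hg 0 t x hx) (e 0) _ _ h1
      have h3 : t + ∑ i : Fin m', e i.succ + e 0 = t + ∑ i, e i := by
        rw [Fin.sum_univ_succ]; omega
      rwa [h3] at h2

include hadd hleib hcomm hK in
lemma theta_mem {n : ℕ} (η : Fin n → L) (e : Fin m → ℕ) (t : ℕ) (x : L)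
    (hx : x ∈ E δ K η t) : thetaApply δ e x ∈ E δ K η (t + ∑ i, e i) :=
  theta_mem_aux K (E δ K η) m δ
    (fun i t x hx => (step δ K hadd hleib hcomm hK η i t hx).2) e t x hx

/-- The union of the `E`'s as a subfield. -/
noncomputable def U {n : ℕ} (η : Fin n → L) : Subfield L where
  carrier := ⋃ s, (E δ K η s : Set L)
  mul_mem' := by
    simp only [Set.mem_iUnion, SetLike.mem_coe]
    rintro a b ⟨s, ha⟩ ⟨t, hb⟩
    exact ⟨max s t, mul_mem (Emono δ K η (le_max_left s t) ha)
      (Emono δ K η (le_max_right s t) hb)⟩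
  one_mem' := by
    simp only [Set.mem_iUnion, SetLike.mem_coe]
    exact ⟨0, one_mem _⟩
  add_mem' := by
    simp only [Set.mem_iUnion, SetLike.mem_coe]
    rintro a b ⟨s, ha⟩ ⟨t, hb⟩
    exact ⟨max s t, add_mem (Emono δ K η (le_max_left s t) ha)
      (Emono δ K η (le_max_right s t) hb)⟩
  zero_mem' := by
    simp only [Set.mem_iUnion, SetLike.mem_coe]
    exact ⟨0, zero_mem _⟩
  neg_mem' := by
    simp only [Set.mem_iUnion, SetLike.mem_coe]
    rintro a ⟨s, ha⟩
    exact ⟨s, neg_mem ha⟩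
  inv_mem' := by
    simp only [Set.mem_iUnion, SetLike.mem_coe]
    rintro a ⟨s, ha⟩
    exact ⟨s, inv_mem ha⟩

lemma mem_U {n : ℕ} (η : Fin n → L) (x : L) :
    x ∈ U δ K η ↔ ∃ s, x ∈ E δ K η s := by
  have h : x ∈ U δ K η ↔ x ∈ ⋃ s, (E δ K η s : Set L) := Iff.rfl
  rw [h, Set.mem_iUnion]
  simp

include hadd hleib hcomm hK in
lemma diffAdjoin_le_U {n : ℕ} (η : Fin n → L) :
    diffAdjoin δ K (Set.range η) ≤ U δ K η := by
  apply sInf_le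
  refine ⟨?_, ?_, ?_⟩
  · intro i x hx
    rw [mem_U] at hx ⊢
    obtain ⟨s, hs⟩ := hx
    exact ⟨s + 1, (step δ K hadd hleib hcomm hK η i s hs).2⟩
  · intro x hx
    rw [mem_U]
    exact ⟨0, IntermediateField.algebraMap_mem _ (⟨x, hx⟩ : K)⟩
  · rintro x ⟨j, rfl⟩
    rw [SetLike.mem_coe, mem_U]
    exact ⟨0, IntermediateField.subset_adjoin _ _
      ⟨fun _ => 0, by simp, j, (thetaApply_zero δ (η j)).symm⟩⟩

/-- the cardinal whose `toNat` is `trdegNat`. -/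
noncomputable def c (F : IntermediateField K L) : Cardinal :=
  ⨆ s : {s : Set F // AlgebraicIndependent K ((↑) : s → F)}, Cardinal.mk s.1

lemma trdegNat_eq (F : IntermediateField K L) : trdegNat K F = (c K F).toNat := rfl

lemma c_mono {F F' : IntermediateField K L} (hFF' : F ≤ F') : c K F ≤ c K F' := by
  refine ciSup_le' ?_
  rintro ⟨s, hs⟩
  have hinj : Function.Injective ((IntermediateField.inclusion hFF') ∘ ((↑) : s → F)) :=
    (IntermediateField.inclusion_injective hFF').comp Subtype.val_injective
  have h2 : AlgebraicIndependent K
      ((↑) : Set.range ((IntermediateField.inclusion hFF') ∘ ((↑) : s → F)) → F') :=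
    (hs.map' (IntermediateField.inclusion_injective hFF')).to_subtype_range
  have h3 : Cardinal.mk s
      = Cardinal.mk (Set.range ((IntermediateField.inclusion hFF') ∘ ((↑) : s → F))) :=
    (Cardinal.mk_range_eq _ hinj).symm
  rw [h3]
  exact le_ciSup (Cardinal.bddAbove_range _)
    (⟨Set.range ((IntermediateField.inclusion hFF') ∘ ((↑) : s → F)), h2⟩ :
      {t : Set F' // AlgebraicIndependent K ((↑) : t → F')})

end Field


lemma eval_nonneg_leadingCoeff (r : ℚ[X]) (N : ℕ)
    (h : ∀ s : ℕ, N ≤ s → 0 ≤ r.eval (s : ℚ)) : 0 ≤ r.leadingCoeff := by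
  by_contra hneg
  push_neg at hneg
  rcases le_or_gt r.degree 0 with hd | hd
  · have hC : r = Polynomial.C (r.coeff 0) := Polynomial.eq_C_of_degree_le_zero hd
    have h0 := h N le_rfl
    rw [hC, eval_C] at h0
    rw [hC, leadingCoeff_C] at hneg
    exact absurd h0 (not_le.2 hneg)
  · have ht := Polynomial.tendsto_atBot_of_leadingCoeff_nonpos r hd hneg.le
    have ht2 : Filter.Tendsto (fun s : ℕ => r.eval (s : ℚ)) Filter.atTop Filter.atBot :=
      ht.comp tendsto_natCast_atTop_atTop
    obtain ⟨s, h1, h2⟩ :=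
      ((ht2.eventually (Filter.eventually_lt_atBot (0 : ℚ))).and
        (Filter.eventually_ge_atTop N)).exists
    exact absurd (h s h2) (not_le.2 h1)

lemma eval_eventually_zero (r : ℚ[X]) (N : ℕ)
    (h : ∀ s : ℕ, N ≤ s → r.eval (s : ℚ) = 0) : r = 0 := by
  refine Polynomial.eq_zero_of_infinite_isRoot r ?_
  refine Set.infinite_of_injective_forall_mem (f := fun k : ℕ => ((N + k : ℕ) : ℚ)) ?_ ?_
  · intro x y hxy
    have := Nat.cast_injective (R := ℚ) hxy
    omega
  · intro k
    exact h (N + k) (Nat.le_add_right _ _)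

lemma comp_linear_natDegree (p : ℚ[X]) (c : ℚ) :
    (p.comp (X + C c)).natDegree = p.natDegree := by
  rw [Polynomial.natDegree_comp, Polynomial.natDegree_X_add_C, mul_one]

lemma comp_linear_leadingCoeff (p : ℚ[X]) (c : ℚ) :
    (p.comp (X + C c)).leadingCoeff = p.leadingCoeff := by
  rw [Polynomial.leadingCoeff_comp (by rw [Polynomial.natDegree_X_add_C]; exact one_ne_zero),
    (Polynomial.monic_X_add_C c).leadingCoeff, one_pow, mul_one]

lemma comp_linear_ne_zero (p : ℚ[X]) (c : ℚ) (hp : p ≠ 0) : p.comp (X + C c) ≠ 0 := by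
  intro h
  apply hp
  rw [← Polynomial.leadingCoeff_eq_zero, ← comp_linear_leadingCoeff p c, h, leadingCoeff_zero]

lemma comp_linear_degree (p : ℚ[X]) (c : ℚ) (hp : p ≠ 0) :
    (p.comp (X + C c)).degree = p.degree := by
  rw [Polynomial.degree_eq_natDegree hp, Polynomial.degree_eq_natDegree (comp_linear_ne_zero p c hp),
    comp_linear_natDegree]

lemma comp_linear_eval (p : ℚ[X]) (c x : ℚ) :
    (p.comp (X + C c)).eval x = p.eval (x + c) := by
  rw [Polynomial.eval_comp, Polynomial.eval_add, Polynomial.eval_X, Polynomial.eval_C]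

/-- If `p(s) ≤ q(s+k)` for large naturals `s` and `p` has positive leading coefficient,
then `deg p ≤ deg q`. -/
lemma degree_le_of_eval_le (p q : ℚ[X]) (k N : ℕ) (hp : p ≠ 0)
    (hlp : 0 < p.leadingCoeff)
    (hpq : ∀ s : ℕ, N ≤ s → p.eval (s : ℚ) ≤ q.eval ((s : ℚ) + (k : ℚ))) :
    p.degree ≤ q.degree := by
  by_contra hlt
  push_neg at hlt
  set q₁ := q.comp (X + C (k : ℚ)) with hq₁
  have hdq₁ : q₁.degree < p.degree := by
    rcases eq_or_ne q 0 with rfl | hq0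
    · simpa [hq₁] using (Polynomial.degree_eq_natDegree hp ▸ hlt.trans_le (by simp) : (⊥ : WithBot ℕ) < p.degree)
    · rw [hq₁, comp_linear_degree q _ hq0]; exact hlt
  have hlc : (q₁ - p).leadingCoeff = -p.leadingCoeff :=
    Polynomial.leadingCoeff_sub_of_degree_lt' hdq₁
  have hnn : 0 ≤ (q₁ - p).leadingCoeff := by
    apply eval_nonneg_leadingCoeff _ N
    intro s hs
    rw [Polynomial.eval_sub, hq₁, comp_linear_eval]
    linarith [hpq s hs]
  rw [hlc] at hnn
  linarith

/-- If additionally degrees agree, leading coefficients compare. -/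
lemma leadingCoeff_le_of_eval_le (p q : ℚ[X]) (k N : ℕ) (hp : p ≠ 0) (hq : q ≠ 0)
    (hdeg : p.degree = q.degree)
    (hpq : ∀ s : ℕ, N ≤ s → p.eval (s : ℚ) ≤ q.eval ((s : ℚ) + (k : ℚ))) :
    p.leadingCoeff ≤ q.leadingCoeff := by
  by_contra hlt
  push_neg at hlt
  set q₁ := q.comp (X + C (k : ℚ)) with hq₁
  set d := p.natDegree with hd
  have hqd : q.natDegree = d := (Polynomial.natDegree_eq_of_degree_eq hdeg).symm
  have hq₁d : q₁.natDegree = d := by rw [hq₁, comp_linear_natDegree, hqd]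
  have hcoeff : (q₁ - p).coeff d = q.leadingCoeff - p.leadingCoeff := by
    rw [Polynomial.coeff_sub]
    have h1 : q₁.coeff d = q₁.leadingCoeff := by
      rw [Polynomial.leadingCoeff, hq₁d]
    rw [h1, hq₁, comp_linear_leadingCoeff, Polynomial.leadingCoeff, Polynomial.leadingCoeff, hd]
  have hne : (q₁ - p).coeff d ≠ 0 := by rw [hcoeff]; intro h0; rw [sub_eq_zero] at h0; exact absurd h0 (ne_of_lt hlt)
  have hdle : (q₁ - p).degree ≤ (d : WithBot ℕ) := by
    refine le_trans (Polynomial.degree_sub_le _ _) (max_le ?_ ?_)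
    · rw [hq₁, comp_linear_degree q _ hq, ← hdeg, Polynomial.degree_eq_natDegree hp]
    · rw [Polynomial.degree_eq_natDegree hp]
  have hdge : (d : WithBot ℕ) ≤ (q₁ - p).degree := Polynomial.le_degree_of_ne_zero hne
  have hdeq : (q₁ - p).degree = (d : WithBot ℕ) := le_antisymm hdle hdge
  have hlcr : (q₁ - p).leadingCoeff = q.leadingCoeff - p.leadingCoeff := by
    rw [Polynomial.leadingCoeff, Polynomial.natDegree_eq_of_degree_eq_some hdeq, hcoeff]
  have hnn : 0 ≤ (q₁ - p).leadingCoeff := by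
    apply eval_nonneg_leadingCoeff _ N
    intro s hs
    rw [Polynomial.eval_sub, hq₁, comp_linear_eval]
    linarith [hpq s hs]
  rw [hlcr] at hnn
  linarith

lemma poly_compare (p q : ℚ[X]) (h k N : ℕ)
    (hq0 : ∀ s : ℕ, N ≤ s → 0 ≤ q.eval (s : ℚ))
    (hp0 : ∀ s : ℕ, N ≤ s → 0 ≤ p.eval (s : ℚ))
    (hqp : ∀ s : ℕ, N ≤ s → q.eval (s : ℚ) ≤ p.eval ((s : ℚ) + (h : ℚ)))
    (hpq : ∀ s : ℕ, N ≤ s → p.eval (s : ℚ) ≤ q.eval ((s : ℚ) + (k : ℚ))) :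
    p.degree = q.degree ∧ p.leadingCoeff = q.leadingCoeff := by
  rcases eq_or_ne p 0 with rfl | hp
  · have hqz : q = 0 := by
      apply eval_eventually_zero q N
      intro s hs
      have := hqp s hs
      simp only [eval_zero] at this
      exact le_antisymm this (hq0 s hs)
    subst hqz; simp
  rcases eq_or_ne q 0 with rfl | hq
  · have hpz : p = 0 := by
      apply eval_eventually_zero p N
      intro s hs
      have := hpq s hs
      simp only [eval_zero] at this
      exact le_antisymm this (hp0 s hs)
    exact absurd hpz hp
  have hlp : 0 < p.leadingCoeff :=
    lt_of_le_of_ne (eval_nonneg_leadingCoeff p N hp0)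
      (Ne.symm (Polynomial.leadingCoeff_ne_zero.mpr hp))
  have hlq : 0 < q.leadingCoeff :=
    lt_of_le_of_ne (eval_nonneg_leadingCoeff q N hq0)
      (Ne.symm (Polynomial.leadingCoeff_ne_zero.mpr hq))
  have hdeg : p.degree = q.degree :=
    le_antisymm (degree_le_of_eval_le p q k N hp hlp hpq)
      (degree_le_of_eval_le q p h N hq hlq hqp)
  exact ⟨hdeg, le_antisymm
    (leadingCoeff_le_of_eval_le p q k N hp hq hdeg hpq)
    (leadingCoeff_le_of_eval_le q p h N hq hp hdeg.symm hqp)⟩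


end Kolchin

/-- Differential type and typical differential dimension are differential birational invariants:
if `K⟨a⟩ = K⟨b⟩` then Kolchin polynomials of `a` and `b` over `K` have the same degree and the
same leading coefficient. -/


theorem type_and_typical_dimension_birational_invariant
    {L : Type*} [Field L] [CharZero L] {m : ℕ} (hm : 1 ≤ m)
    (δ : Fin m → L → L)
    (hadd : ∀ i : Fin m, ∀ x y : L, δ i (x + y) = δ i x + δ i y)
    (hleib : ∀ i : Fin m, ∀ x y : L, δ i (x * y) = x * δ i y + δ i x * y)
    (hcomm : ∀ i j : Fin m, ∀ x : L, δ i (δ j x) = δ j (δ i x))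
    (K : Subfield L) (hK : IsDiffSubfield δ K)
    {n₁ n₂ : ℕ} (a : Fin n₁ → L) (b : Fin n₂ → L)
    (hgen : diffAdjoin δ K (Set.range a) = diffAdjoin δ K (Set.range b))
    (p q : ℚ[X])
    (hp : IsKolchinPoly δ K a p)
    (hq : IsKolchinPoly δ K b q) :
    p.degree = q.degree ∧ p.leadingCoeff = q.leadingCoeff := by
  classical
  obtain ⟨sp, hp⟩ := hp
  obtain ⟨sq, hq⟩ := hq
  have hbU : ∀ j, ∃ t, b j ∈ Kolchin.E δ K a t := by
    intro j
    have h1 : b j ∈ diffAdjoin δ K (Set.range b) :=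
      Subfield.mem_sInf.2 fun F hF => hF.2.2 ⟨j, rfl⟩
    rw [← hgen] at h1
    exact (Kolchin.mem_U δ K a (b j)).1
      (Kolchin.diffAdjoin_le_U δ K hadd hleib hcomm hK a h1)
  have haU : ∀ j, ∃ t, a j ∈ Kolchin.E δ K b t := by
    intro j
    have h1 : a j ∈ diffAdjoin δ K (Set.range a) :=
      Subfield.mem_sInf.2 fun F hF => hF.2.2 ⟨j, rfl⟩
    rw [hgen] at h1
    exact (Kolchin.mem_U δ K b (a j)).1
      (Kolchin.diffAdjoin_le_U δ K hadd hleib hcomm hK b h1)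
  choose tb htb using hbU
  choose ta hta using haU
  set hB := Finset.univ.sup tb with hhB
  set kA := Finset.univ.sup ta with hkA
  have hbh : ∀ j, b j ∈ Kolchin.E δ K a hB := fun j =>
    Kolchin.Emono δ K a (Finset.le_sup (Finset.mem_univ j)) (htb j)
  have hak : ∀ j, a j ∈ Kolchin.E δ K b kA := fun j =>
    Kolchin.Emono δ K b (Finset.le_sup (Finset.mem_univ j)) (hta j)
  have key1 : ∀ s, Kolchin.E δ K b s ≤ Kolchin.E δ K a (hB + s) := by
    intro s
    rw [Kolchin.E, IntermediateField.adjoin_le_iff]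
    rintro x ⟨e, hes, j, rfl⟩
    exact Kolchin.Emono δ K a (by omega)
      (Kolchin.theta_mem δ K hadd hleib hcomm hK a e hB (b j) (hbh j))
  have key2 : ∀ s, Kolchin.E δ K a s ≤ Kolchin.E δ K b (kA + s) := by
    intro s
    rw [Kolchin.E, IntermediateField.adjoin_le_iff]
    rintro x ⟨e, hes, j, rfl⟩
    exact Kolchin.Emono δ K b (by omega)
      (Kolchin.theta_mem δ K hadd hleib hcomm hK b e kA (a j) (hak j))
  have card1 : ∀ s, Kolchin.c K (Kolchin.E δ K b s) ≤ Kolchin.c K (Kolchin.E δ K a (hB + s)) :=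
    fun s => Kolchin.c_mono K (key1 s)
  have card2 : ∀ s, Kolchin.c K (Kolchin.E δ K a s) ≤ Kolchin.c K (Kolchin.E δ K b (kA + s)) :=
    fun s => Kolchin.c_mono K (key2 s)
  by_cases hfin : ∀ s, Kolchin.c K (Kolchin.E δ K a s) < Cardinal.aleph0
  · have hfinb : ∀ s, Kolchin.c K (Kolchin.E δ K b s) < Cardinal.aleph0 :=
      fun s => lt_of_le_of_lt (card1 s) (hfin _)
    have tr1 : ∀ s, diffTrdeg δ K b s ≤ diffTrdeg δ K a (hB + s) := by
      intro s
      rw [Kolchin.diffTrdeg_eq, Kolchin.diffTrdeg_eq, Kolchin.trdegNat_eq, Kolchin.trdegNat_eq]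
      exact Cardinal.toNat_le_toNat (card1 s) (hfin _)
    have tr2 : ∀ s, diffTrdeg δ K a s ≤ diffTrdeg δ K b (kA + s) := by
      intro s
      rw [Kolchin.diffTrdeg_eq, Kolchin.diffTrdeg_eq, Kolchin.trdegNat_eq, Kolchin.trdegNat_eq]
      exact Cardinal.toNat_le_toNat (card2 s) (hfinb _)
    apply Kolchin.poly_compare p q hB kA (sp + sq)
    · intro s hs
      rw [hq s (by omega)]
      exact Nat.cast_nonneg _
    · intro s hs
      rw [hp s (by omega)]
      exact Nat.cast_nonneg _
    · intro s hs
      have e2 : p.eval ((s : ℚ) + (hB : ℚ)) = (diffTrdeg δ K a (hB + s) : ℚ) := by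
        rw [← hp (hB + s) (by omega)]
        congr 1
        push_cast
        ring
      rw [hq s (by omega), e2]
      exact_mod_cast tr1 s
    · intro s hs
      have e2 : q.eval ((s : ℚ) + (kA : ℚ)) = (diffTrdeg δ K b (kA + s) : ℚ) := by
        rw [← hq (kA + s) (by omega)]
        congr 1
        push_cast
        ring
      rw [hp s (by omega), e2]
      exact_mod_cast tr2 s
  · push_neg at hfin
    obtain ⟨s₁, hs₁⟩ := hfin
    have hz : ∀ s, s₁ ≤ s → diffTrdeg δ K a s = 0 := by
      intro s hs
      rw [Kolchin.diffTrdeg_eq, Kolchin.trdegNat_eq]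
      exact Cardinal.toNat_apply_of_aleph0_le
        (le_trans hs₁ (Kolchin.c_mono K (Kolchin.Emono δ K a hs)))
    have hzb : ∀ s, kA + s₁ ≤ s → diffTrdeg δ K b s = 0 := by
      intro s hs
      rw [Kolchin.diffTrdeg_eq, Kolchin.trdegNat_eq]
      refine Cardinal.toNat_apply_of_aleph0_le (le_trans hs₁ (le_trans (card2 s₁) ?_))
      exact Kolchin.c_mono K (Kolchin.Emono δ K b hs)
    have hp0 : p = 0 := by
      refine Kolchin.eval_eventually_zero p (sp + s₁) (fun s hs => ?_)
      rw [hp s (by omega), hz s (by omega)]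
      simp
    have hq0 : q = 0 := by
      refine Kolchin.eval_eventually_zero q (sq + kA + s₁) (fun s hs => ?_)
      rw [hq s (by omega), hzb s (by omega)]
      simp
    subst hp0
    subst hq0
    simp
end

section
/- Let K be a field equipped with two derivations δ₁ and δ₂, let C₁ = {x ∈ K : δ₁(x) = 0} and C₂ = {x ∈ K : δ₂(x) = 0} be the rings of constants, and let G = { M(u₁,u₂,u) : δ₁(u₁) = 0, δ₂(u₂) = 0 } ≤ GL₃(K). Then the commutator subgroup of G equals { M(0,0,c) : c ∈ S }, where S is the subring of K generated by C₁ ∪ C₂. -/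
open Matrix

/-- `M r₁ r₂ r` is the 3×3 upper unitriangular matrix with (1,2)-entry `r₁`, (2,3)-entry `r₂`
and (1,3)-entry `r`. -/
def unitri {R : Type*} [CommRing R] (r₁ r₂ r : R) : Matrix (Fin 3) (Fin 3) R :=
  !![1, r₁, r; 0, 1, r₂; 0, 0, 1]

theorem unitri_det {R : Type*} [CommRing R] (r₁ r₂ r : R) : (unitri r₁ r₂ r).det = 1 := by
  simp [unitri, Matrix.det_fin_three, Matrix.vecHead, Matrix.vecTail]

/-- `M r₁ r₂ r` as an element of `GL₃(R)`. -/
noncomputable def unitriGL {R : Type*} [CommRing R] (r₁ r₂ r : R) :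
    GL (Fin 3) R :=
  Matrix.nonsingInvUnit (unitri r₁ r₂ r) (by rw [unitri_det]; exact isUnit_one)

theorem unitri_mul {R : Type*} [CommRing R] (a₁ a₂ a b₁ b₂ b : R) :
    unitri a₁ a₂ a * unitri b₁ b₂ b = unitri (a₁+b₁) (a₂+b₂) (a+b+a₁*b₂) := by
  simp only [unitri, Matrix.mul_fin_three]; ring_nf

theorem unitriGL_mul {R : Type*} [CommRing R] (a₁ a₂ a b₁ b₂ b : R) :
    unitriGL a₁ a₂ a * unitriGL b₁ b₂ b = unitriGL (a₁+b₁) (a₂+b₂) (a+b+a₁*b₂) :=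
  Units.ext (unitri_mul a₁ a₂ a b₁ b₂ b)

theorem unitriGL_one {R : Type*} [CommRing R] : (unitriGL 0 0 0 : GL (Fin 3) R) = 1 := by
  apply Units.ext
  show unitri 0 0 0 = (1 : Matrix (Fin 3) (Fin 3) R)
  rw [Matrix.one_fin_three]; simp [unitri]

theorem unitriGL_congr {R : Type*} [CommRing R] {a₁ a₂ a b₁ b₂ b : R}
    (h₁ : a₁ = b₁) (h₂ : a₂ = b₂) (h : a = b) : unitriGL a₁ a₂ a = unitriGL b₁ b₂ b := by
  subst h₁; subst h₂; subst h; rfl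

theorem unitriGL_inv {R : Type*} [CommRing R] (a₁ a₂ a : R) :
    (unitriGL a₁ a₂ a)⁻¹ = unitriGL (-a₁) (-a₂) (a₁*a₂-a) := by
  symm
  apply eq_inv_of_mul_eq_one_left
  rw [unitriGL_mul]
  rw [show (-a₁+a₁ : R) = 0 by ring, show (-a₂+a₂ : R) = 0 by ring,
    show (a₁*a₂-a+a+(-a₁)*a₂ : R) = 0 by ring, unitriGL_one]

open scoped commutatorElement in
theorem unitriGL_comm {R : Type*} [CommRing R] (a₁ a₂ a b₁ b₂ b : R) :
    ⁅unitriGL a₁ a₂ a, unitriGL b₁ b₂ b⁆ = unitriGL 0 0 (a₁*b₂ - b₁*a₂) := by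
  rw [commutatorElement_def, unitriGL_inv, unitriGL_inv, unitriGL_mul, unitriGL_mul,
    unitriGL_mul]
  exact unitriGL_congr (by ring) (by ring) (by ring)

/-- The commutator subgroup of `G = {M(u₁,u₂,u) : δ₁ u₁ = 0, δ₂ u₂ = 0} ≤ GL₃(K)` equals
`{M(0,0,c) : c ∈ S}`, where `S` is the subring of `K` generated by the union of the constants
of `δ₁` and of `δ₂`. -/
theorem diffUnitri_commutator_subgroup {K : Type*} [Field K] (δ₁ δ₂ : K → K)
    (hadd₁ : ∀ x y : K, δ₁ (x + y) = δ₁ x + δ₁ y)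
    (hadd₂ : ∀ x y : K, δ₂ (x + y) = δ₂ x + δ₂ y)
    (hleib₁ : ∀ x y : K, δ₁ (x * y) = x * δ₁ y + δ₁ x * y)
    (hleib₂ : ∀ x y : K, δ₂ (x * y) = x * δ₂ y + δ₂ x * y)
    (H : Subgroup (GL (Fin 3) K))
    (hH : (H : Set (GL (Fin 3) K)) =
      {g | ∃ u₁ u₂ u : K, δ₁ u₁ = 0 ∧ δ₂ u₂ = 0 ∧ g = unitriGL u₁ u₂ u}) :
    ((⁅H, H⁆ : Subgroup (GL (Fin 3) K)) : Set (GL (Fin 3) K)) =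
      {g | ∃ c ∈ Subring.closure ({x : K | δ₁ x = 0} ∪ {x : K | δ₂ x = 0}),
        g = unitriGL 0 0 c} := by
  -- basic derivation facts
  have hz₁ : δ₁ (0 : K) = 0 := by
    have h := hadd₁ 0 0; rw [add_zero] at h; exact (left_eq_add.mp h)
  have hz₂ : δ₂ (0 : K) = 0 := by
    have h := hadd₂ 0 0; rw [add_zero] at h; exact (left_eq_add.mp h)
  have ho₁ : δ₁ (1 : K) = 0 := by
    have h := hleib₁ 1 1; rw [mul_one, one_mul, mul_one] at h; exact (left_eq_add.mp h)
  have ho₂ : δ₂ (1 : K) = 0 := by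
    have h := hleib₂ 1 1; rw [mul_one, one_mul, mul_one] at h; exact (left_eq_add.mp h)
  set S := Subring.closure ({x : K | δ₁ x = 0} ∪ {x : K | δ₂ x = 0}) with hS
  have hmemH : ∀ u₁ u₂ u : K, δ₁ u₁ = 0 → δ₂ u₂ = 0 → unitriGL u₁ u₂ u ∈ H := by
    intro u₁ u₂ u h1 h2
    have : unitriGL u₁ u₂ u ∈ (H : Set (GL (Fin 3) K)) := by
      rw [hH]; exact ⟨u₁, u₂, u, h1, h2, rfl⟩
    exact this
  -- the target subgroup T
  let T : Subgroup (GL (Fin 3) K) :=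
    { carrier := {g | ∃ c ∈ S, g = unitriGL 0 0 c}
      one_mem' := ⟨0, zero_mem S, unitriGL_one.symm⟩
      mul_mem' := by
        rintro x y ⟨c, hc, rfl⟩ ⟨d, hd, rfl⟩
        exact ⟨c + d, add_mem hc hd, by
          rw [unitriGL_mul]; exact unitriGL_congr (by ring) (by ring) (by ring)⟩
      inv_mem' := by
        rintro x ⟨c, hc, rfl⟩
        exact ⟨-c, neg_mem hc, by
          rw [unitriGL_inv]; exact unitriGL_congr (by ring) (by ring) (by ring)⟩ }
  suffices h : ⁅H, H⁆ = T by rw [h]; rfl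
  apply le_antisymm
  · rw [Subgroup.commutator_le]
    intro g hg h hh
    have hg' : g ∈ (H : Set (GL (Fin 3) K)) := hg
    have hh' : h ∈ (H : Set (GL (Fin 3) K)) := hh
    rw [hH] at hg' hh'
    obtain ⟨a₁, a₂, a, ha1, ha2, rfl⟩ := hg'
    obtain ⟨b₁, b₂, b, hb1, hb2, rfl⟩ := hh'
    rw [unitriGL_comm]
    refine ⟨a₁ * b₂ - b₁ * a₂, ?_, rfl⟩
    exact sub_mem
      (mul_mem (Subring.subset_closure (Or.inl ha1)) (Subring.subset_closure (Or.inr hb2)))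
      (mul_mem (Subring.subset_closure (Or.inl hb1)) (Subring.subset_closure (Or.inr ha2)))
  · rintro g ⟨c, hc, rfl⟩
    -- the additive subgroup of good constants
    let A : AddSubgroup K :=
      { carrier := {c | unitriGL (0:K) 0 c ∈ ⁅H, H⁆}
        zero_mem' := by show unitriGL (0:K) 0 0 ∈ ⁅H, H⁆; rw [unitriGL_one]; exact one_mem _
        add_mem' := by
          intro x y hx hy
          show unitriGL (0:K) 0 (x + y) ∈ ⁅H, H⁆
          have : unitriGL (0:K) 0 (x + y) = unitriGL 0 0 x * unitriGL 0 0 y := by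
            rw [unitriGL_mul]; exact unitriGL_congr (by ring) (by ring) (by ring)
          rw [this]; exact mul_mem hx hy
        neg_mem' := by
          intro x hx
          show unitriGL (0:K) 0 (-x) ∈ ⁅H, H⁆
          have : unitriGL (0:K) 0 (-x) = (unitriGL 0 0 x)⁻¹ := by
            rw [unitriGL_inv]; exact unitriGL_congr (by ring) (by ring) (by ring)
          rw [this]; exact inv_mem hx }
    -- the set of products
    set P : Set K := {x | ∃ a, δ₁ a = 0 ∧ ∃ b, δ₂ b = 0 ∧ x = a * b} with hP
    -- B : subring carried by the additive closure of P
    have hmulP : ∀ x ∈ P, ∀ y ∈ P, x * y ∈ P := by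
      rintro x ⟨a, ha, b, hb, rfl⟩ y ⟨a', ha', b', hb', rfl⟩
      refine ⟨a * a', ?_, b * b', ?_, by ring⟩
      · rw [hleib₁, ha, ha']; ring
      · rw [hleib₂, hb, hb']; ring
    let B : Subring K :=
      { carrier := (AddSubgroup.closure P : Set K)
        zero_mem' := zero_mem _
        add_mem' := fun hx hy => add_mem hx hy
        neg_mem' := fun hx => neg_mem hx
        one_mem' := AddSubgroup.subset_closure ⟨1, ho₁, 1, ho₂, (mul_one 1).symm⟩
        mul_mem' := by
          intro x y hx hy
          induction hx, hy using AddSubgroup.closure_induction₂ with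
          | mem x y hx hy => exact AddSubgroup.subset_closure (hmulP x hx y hy)
          | zero_left x hx => simpa using zero_mem (AddSubgroup.closure P)
          | zero_right x hx => simpa using zero_mem (AddSubgroup.closure P)
          | add_left x y z hx hy hz h1 h2 => rw [add_mul]; exact add_mem h1 h2
          | add_right y z x hy hz hx h1 h2 => rw [mul_add]; exact add_mem h1 h2
          | neg_left x y hx hy h => rw [neg_mul]; exact neg_mem h
          | neg_right x y hx hy h => rw [mul_neg]; exact neg_mem h }
    have hSB : S ≤ B := by
      rw [hS]
      apply Subring.closure_le.mpr
      rintro x (hx | hx)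
      · exact AddSubgroup.subset_closure ⟨x, hx, 1, ho₂, (mul_one x).symm⟩
      · exact AddSubgroup.subset_closure ⟨1, ho₁, x, hx, (one_mul x).symm⟩
    have hBA : AddSubgroup.closure P ≤ A := by
      refine (AddSubgroup.closure_le A).mpr ?_
      rintro x ⟨a, ha, b, hb, rfl⟩
      show unitriGL (0:K) 0 (a * b) ∈ ⁅H, H⁆
      open scoped commutatorElement in
      have : unitriGL (0:K) 0 (a * b) = ⁅unitriGL a 0 0, unitriGL 0 b 0⁆ := by
        rw [unitriGL_comm]; exact unitriGL_congr rfl rfl (by ring)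
      rw [this]
      exact Subgroup.commutator_mem_commutator (hmemH a 0 0 ha hz₂) (hmemH 0 b 0 hz₁ hb)
    exact hBA (hSB hc)
end
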